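/- Let $\Phi$ be differentiable and convex on an open convex $\mathcal{D}\subseteq\mathbb{R}^n$, $\mathcal{X}\subseteq\mathcal{D}$ convex, $\eta>0$, $b_t\in\mathbb{R}^n$, and $x_t\in\mathcal{X}$. Suppose $y_{t+1}\in\mathcal{D}$ satisfies $\nabla\Phi(y_{t+1}) = \nabla\Phi(x_t) - \eta b_t$, and let $x_{t+1} = \Pi^\Phi_{\mathcal{X}}(y_{t+1})$ be the Bregman projection of $y_{t+1}$ onto $\mathcal{X}$. Then for every $x\in\mathcal{X}$: $\langle b_t, x_t - x\rangle \leq \tfrac{1}{\eta}\left(D_\Phi(x,x_t) - D_\Phi(x,x_{t+1}) + D_\Phi(x_t, y_{t+1})\right)$. -/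

import Mathlib

open Finset

/-- Bregman divergence of `Φ` with gradient field `G`. -/
noncomputable def bregman {n : ℕ} (Φ : EuclideanSpace ℝ (Fin n) → ℝ)
    (G : EuclideanSpace ℝ (Fin n) → EuclideanSpace ℝ (Fin n))
    (y y' : EuclideanSpace ℝ (Fin n)) : ℝ :=
  Φ y - Φ y' - ∑ i, G y' i * (y i - y' i)

open Topology in
/-- Directional derivative along a line from the gradient. -/
lemma omd_dirDeriv {n : ℕ} (Φ : EuclideanSpace ℝ (Fin n) → ℝ)
    (g u d : EuclideanSpace ℝ (Fin n)) (h : HasGradientAt Φ g u) :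
    HasDerivAt (fun t : ℝ => Φ (u + t • d)) (∑ i, g i * d i) 0 := by
  have hline : HasDerivAt (fun t : ℝ => u + t • d) d 0 := by
    simpa using ((hasDerivAt_id (0:ℝ)).smul_const d).const_add u
  have h0 : HasFDerivAt Φ (InnerProductSpace.toDual ℝ _ g) ((fun t : ℝ => u + t • d) 0) := by
    simpa using h.hasFDerivAt
  simpa [Function.comp_def, InnerProductSpace.toDual_apply_apply, PiLp.inner_apply, RCLike.inner_apply, mul_comm]
    using h0.comp_hasDerivAt 0 hline

open Topology in
lemma omd_slope_le {g : ℝ → ℝ} {c A : ℝ} (hg : HasDerivAt g c 0)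
    (h : ∀ t : ℝ, 0 < t → t ≤ 1 → (g t - g 0) / t ≤ A) : c ≤ A := by
  have ht : Filter.Tendsto (slope g 0) (𝓝[>] (0:ℝ)) (𝓝 c) :=
    (hasDerivAt_iff_tendsto_slope.mp hg).mono_left
      (nhdsWithin_mono _ (fun t ht => ne_of_gt ht))
  refine le_of_tendsto ht ?_
  filter_upwards [Ioc_mem_nhdsGT one_pos] with t ht
  simpa [slope_def_field, div_eq_inv_mul] using h t ht.1 ht.2

/-- Gradient inequality for a convex function: `⟨∇Φ(u), v - u⟩ ≤ Φ(v) - Φ(u)`. -/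
lemma omd_grad_ineq {n : ℕ} {D : Set (EuclideanSpace ℝ (Fin n))} (hDconv : Convex ℝ D)
    {Φ : EuclideanSpace ℝ (Fin n) → ℝ} (hΦconv : ConvexOn ℝ D Φ)
    {g u v : EuclideanSpace ℝ (Fin n)} (hu : u ∈ D) (hv : v ∈ D)
    (hg : HasGradientAt Φ g u) :
    ∑ i, g i * (v i - u i) ≤ Φ v - Φ u := by
  have hder := omd_dirDeriv Φ g u (v - u) hg
  have hder' : HasDerivAt (fun t : ℝ => Φ (u + t • (v - u))) (∑ i, g i * (v i - u i)) 0 := by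
    convert hder using 2 with i
    simp
  refine omd_slope_le hder' fun t ht0 ht1 => ?_
  have hmem : u + t • (v - u) = (1 - t) • u + t • v := by module
  have hconv := hΦconv.2 hu hv (by linarith : (0:ℝ) ≤ 1 - t) ht0.le (by ring)
  rw [div_le_iff₀ ht0]
  have h0 : Φ (u + (0:ℝ) • (v - u)) = Φ u := by simp
  rw [hmem, h0]
  calc Φ ((1 - t) • u + t • v) - Φ u ≤ (1 - t) * Φ u + t * Φ v - Φ u := by
        simpa [smul_eq_mul] using sub_le_sub_right hconv (Φ u)
    _ = (Φ v - Φ u) * t := by ring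

/-- One-step online mirror descent inequality: with `∇Φ(y_{t+1}) = ∇Φ(x_t) - η b_t` and
`x_{t+1}` the Bregman projection of `y_{t+1}` onto `X`, for all `x ∈ X`,
`⟨b_t, x_t - x⟩ ≤ (1/η)(D_Φ(x, x_t) - D_Φ(x, x_{t+1}) + D_Φ(x_t, y_{t+1}))`. -/
theorem omd_one_step {n : ℕ} (D : Set (EuclideanSpace ℝ (Fin n)))
    (hDopen : IsOpen D) (hDconv : Convex ℝ D)
    (Φ : EuclideanSpace ℝ (Fin n) → ℝ)
    (G : EuclideanSpace ℝ (Fin n) → EuclideanSpace ℝ (Fin n))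
    (hG : ∀ w ∈ D, HasGradientAt Φ (G w) w)
    (hΦconv : ConvexOn ℝ D Φ)
    (X : Set (EuclideanSpace ℝ (Fin n))) (hXD : X ⊆ D) (hXconv : Convex ℝ X)
    (η : ℝ) (hη : 0 < η) (b : EuclideanSpace ℝ (Fin n))
    (xt : EuclideanSpace ℝ (Fin n)) (hxt : xt ∈ X)
    (yt1 : EuclideanSpace ℝ (Fin n)) (hyt1 : yt1 ∈ D)
    (hupd : ∀ i, G yt1 i = G xt i - η * b i)
    (xt1 : EuclideanSpace ℝ (Fin n)) (hxt1 : xt1 ∈ X)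
    (hproj : ∀ x' ∈ X, bregman Φ G xt1 yt1 ≤ bregman Φ G x' yt1) :
    ∀ x ∈ X, ∑ i, b i * (xt i - x i)
      ≤ (1 / η) * (bregman Φ G x xt - bregman Φ G x xt1 + bregman Φ G xt yt1) := by
  intro x hx
  set d : EuclideanSpace ℝ (Fin n) := x - xt1 with hd
  -- first-order optimality of the Bregman projection
  have hopt : 0 ≤ ∑ i, (G xt1 i - G yt1 i) * (x i - xt1 i) := by
    have hΦder := omd_dirDeriv Φ (G xt1) xt1 d (hG xt1 (hXD hxt1))
    -- derivative of the linear part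
    have hlin : HasDerivAt (fun t : ℝ => ∑ i, G yt1 i * (xt1 i + t * d i - yt1 i))
        (∑ i, G yt1 i * d i) 0 := by
      refine HasDerivAt.fun_sum fun i _ => ?_
      exact ((((hasDerivAt_mul_const (d i)).const_add (xt1 i)).sub_const (yt1 i)).const_mul
        (G yt1 i))
    have hbder : HasDerivAt (fun t : ℝ => bregman Φ G (xt1 + t • d) yt1)
        (∑ i, G xt1 i * d i - ∑ i, G yt1 i * d i) 0 := by
      have := (hΦder.sub_const (Φ yt1)).sub hlin
      convert this using 2 with t
      exacts [rfl, rfl, by simp [bregman]]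
    have hkey : ∑ i, G xt1 i * d i - ∑ i, G yt1 i * d i ≥ 0 := by
      have := omd_slope_le (c := -(∑ i, G xt1 i * d i - ∑ i, G yt1 i * d i)) (A := 0)
        hbder.neg ?_
      · linarith
      · intro t ht0 ht1
        have hmemX : xt1 + t • d ∈ X := by
          have : xt1 + t • d = (1 - t) • xt1 + t • x := by rw [hd]; module
          rw [this]
          exact hXconv hxt1 hx (by linarith) ht0.le (by ring)
        have h0 : xt1 + (0:ℝ) • d = xt1 := by simp
        have := hproj _ hmemX
        rw [div_le_iff₀ ht0]
        simp only [Pi.neg_apply, h0]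
        nlinarith
    have : ∑ i, (G xt1 i - G yt1 i) * (x i - xt1 i)
        = ∑ i, G xt1 i * d i - ∑ i, G yt1 i * d i := by
      rw [← Finset.sum_sub_distrib]
      refine Finset.sum_congr rfl fun i _ => ?_
      have : d i = x i - xt1 i := by simp [hd]
      rw [this]; ring
    linarith [this ▸ hkey]
  -- nonnegativity of D(xt1, yt1)
  have hnn : 0 ≤ bregman Φ G xt1 yt1 := by
    have := omd_grad_ineq hDconv hΦconv hyt1 (hXD hxt1) (hG yt1 hyt1)
    simp only [bregman]; linarith
  -- three-point style decomposition: D(x,yt1) - D(x,xt1) - D(xt1,yt1) = ⟨G xt1 - G yt1, x - xt1⟩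
  have hT : ∑ i, G xt1 i * (x i - xt1 i) + ∑ i, G yt1 i * (xt1 i - yt1 i)
      - ∑ i, G yt1 i * (x i - yt1 i) = ∑ i, (G xt1 i - G yt1 i) * (x i - xt1 i) := by
    rw [← Finset.sum_add_distrib, ← Finset.sum_sub_distrib]
    exact Finset.sum_congr rfl fun i _ => by ring
  have hdecomp : bregman Φ G x yt1 - bregman Φ G x xt1 - bregman Φ G xt1 yt1
      = ∑ i, (G xt1 i - G yt1 i) * (x i - xt1 i) := by
    simp only [bregman]; linarith
  -- three-point identity with the update rule
  have hU : ∑ i, G yt1 i * (x i - yt1 i) - ∑ i, G yt1 i * (xt i - yt1 i)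
      - ∑ i, G xt i * (x i - xt i) = η * ∑ i, b i * (xt i - x i) := by
    rw [Finset.mul_sum, ← Finset.sum_sub_distrib, ← Finset.sum_sub_distrib]
    exact Finset.sum_congr rfl fun i _ => by rw [hupd i]; ring
  have hthree : η * ∑ i, b i * (xt i - x i)
      = bregman Φ G x xt - bregman Φ G x yt1 + bregman Φ G xt yt1 := by
    simp only [bregman]; linarith
  have hmono : bregman Φ G x xt1 ≤ bregman Φ G x yt1 := by linarith
  have hfin : η * ∑ i, b i * (xt i - x i)
      ≤ bregman Φ G x xt - bregman Φ G x xt1 + bregman Φ G xt yt1 := by linarith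
  calc ∑ i, b i * (xt i - x i) = (1 / η) * (η * ∑ i, b i * (xt i - x i)) := by
        field_simp
    _ ≤ (1 / η) * (bregman Φ G x xt - bregman Φ G x xt1 + bregman Φ G xt yt1) :=
        mul_le_mul_of_nonneg_left hfin (by positivity)
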